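/- Let δ be an m×r binary matrix with unordered GLT structure and r ≤ 4. If δ satisfies the four conditions (i) every column has at least 2+s nonzero entries, (ii) every pair of distinct columns has at least 4+s rows that are nonzero in at least one of the two columns, (iii) δ has at least 2r+s nonzero rows, and (iv) every submatrix obtained by deleting one column has at least 2(r−1)+s nonzero rows, then δ satisfies the counting rule CR(r,s). -/

import Mathlib

open Matrix

open Classical in
/-- The counting rule `CR(r,s)`: every submatrix formed by a nonempty set `S` of
columns has at least `2 * |S| + s` nonzero rows. -/
def CR {I : Type*} [Fintype I] {r : ℕ} (δ : Matrix I (Fin r) Bool) (s : ℕ) : Prop :=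
  ∀ S : Finset (Fin r), S.Nonempty →
    2 * S.card + s ≤ (Finset.univ.filter fun i : I => ∃ j ∈ S, δ i j = true).card

/-- A binary matrix with unordered GLT structure: pairwise distinct pivot rows. -/
def IsGLTBool {m r : ℕ} (δ : Matrix (Fin m) (Fin r) Bool) : Prop :=
  ∃ l : Fin r → Fin m, Function.Injective l ∧
    ∀ j : Fin r, δ (l j) j = true ∧ ∀ i : Fin m, i < l j → δ i j = false

open Classical in
/-- Corollary 2, sufficiency for `r ≤ 4`: if a binary GLT matrix `δ` with at
most four columns satisfies the four simple conditions (every column has at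
least `2+s` nonzero entries; every pair of distinct columns covers at least
`4+s` nonzero rows; `δ` has at least `2r+s` nonzero rows; deleting any one
column leaves at least `2(r-1)+s` nonzero rows), then `δ` satisfies `CR(r,s)`. -/
theorem simple_counting_rules_sufficient {m r s : ℕ} (hr : r ≤ 4)
    (δ : Matrix (Fin m) (Fin r) Bool) (hglt : IsGLTBool δ)
    (h1 : ∀ j : Fin r, 2 + s ≤ (Finset.univ.filter fun i : Fin m => δ i j = true).card)
    (h2 : ∀ j k : Fin r, j ≠ k →
      4 + s ≤ (Finset.univ.filter fun i : Fin m => δ i j = true ∨ δ i k = true).card)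
    (h3 : 2 * r + s ≤ (Finset.univ.filter fun i : Fin m => ∃ j : Fin r, δ i j = true).card)
    (h4 : ∀ j : Fin r,
      2 * (r - 1) + s ≤
        (Finset.univ.filter fun i : Fin m => ∃ k : Fin r, k ≠ j ∧ δ i k = true).card) :
    CR δ s := by
  intro S hS
  have hSle : S.card ≤ r := by simpa using Finset.card_le_card (Finset.subset_univ S)
  have h1' : 1 ≤ S.card := hS.card_pos
  -- helper: full set case
  rcases Nat.lt_or_ge S.card 3 with hlt | hge
  · interval_cases h : S.card
    · obtain ⟨j, rfl⟩ := Finset.card_eq_one.mp h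
      calc 2 * 1 + s ≤ (Finset.univ.filter fun i : Fin m => δ i j = true).card := h1 j
        _ ≤ _ := by
          apply Finset.card_le_card
          intro i hi
          simp only [Finset.mem_filter] at *
          exact ⟨hi.1, j, Finset.mem_singleton_self j, hi.2⟩
    · obtain ⟨j, k, hjk, rfl⟩ := Finset.card_eq_two.mp h
      calc 2 * 2 + s ≤ (Finset.univ.filter fun i : Fin m => δ i j = true ∨ δ i k = true).card :=
            h2 j k hjk
        _ ≤ _ := by
          apply Finset.card_le_card
          intro i hi
          simp only [Finset.mem_filter, Finset.mem_insert, Finset.mem_singleton] at *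
          rcases hi.2 with hj | hk
          · exact ⟨hi.1, j, Or.inl rfl, hj⟩
          · exact ⟨hi.1, k, Or.inr rfl, hk⟩
  · rcases eq_or_lt_of_le hSle with heq | hlt
    · -- S = univ
      have hSuniv : S = Finset.univ := Finset.eq_univ_of_card S (by simpa using heq)
      subst hSuniv
      calc 2 * Finset.univ.card + s
          = 2 * r + s := by simp
        _ ≤ (Finset.univ.filter fun i : Fin m => ∃ j : Fin r, δ i j = true).card := h3
        _ ≤ _ := by
          apply Finset.card_le_card
          intro i hi
          simp only [Finset.mem_filter] at *
          obtain ⟨j, hj⟩ := hi.2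
          exact ⟨hi.1, j, Finset.mem_univ j, hj⟩
    · -- S.card = r - 1 (since 3 ≤ S.card < r ≤ 4 forces S.card = 3, r = 4)
      have hc3 : S.card = 3 := by omega
      have hr4 : r = 4 := by omega
      have hcompl : Sᶜ.card = 1 := by
        have h := Finset.card_compl S
        rw [Fintype.card_fin] at h
        omega
      obtain ⟨j, hj⟩ := Finset.card_eq_one.mp hcompl
      have hmem : ∀ k : Fin r, k ∈ S ↔ k ≠ j := by
        intro k
        constructor
        · intro hk hkj
          subst hkj
          have : k ∈ Sᶜ := by rw [hj]; exact Finset.mem_singleton_self k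
          exact absurd hk (Finset.mem_compl.mp this)
        · intro hkj
          by_contra hk
          have : k ∈ Sᶜ := Finset.mem_compl.mpr hk
          rw [hj, Finset.mem_singleton] at this
          exact hkj this
      calc 2 * S.card + s = 2 * (r - 1) + s := by omega
        _ ≤ (Finset.univ.filter fun i : Fin m =>
              ∃ k : Fin r, k ≠ j ∧ δ i k = true).card := h4 j
        _ ≤ _ := by
          apply Finset.card_le_card
          intro i hi
          simp only [Finset.mem_filter] at *
          obtain ⟨k, hkj, hk⟩ := hi.2
          exact ⟨hi.1, k, (hmem k).mpr hkj, hk⟩
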